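/- arXiv:2306.03968 — 4 statements merged into one kernel-verified Lean document; each statement's English description precedes it below -/
import Mathlib

section
/- For a positive definite block matrix M = [[A, B], [Bᵀ, C]] (with A and C square diagonal blocks), det M ≤ det A · det C. -/
open Matrix

-- det(1 + R) ≥ 1 for a positive semidefinite real matrix R
lemma one_le_det_one_add {n : ℕ} {R : Matrix (Fin n) (Fin n) ℝ}
    (hR : R.PosSemidef) : 1 ≤ (1 + R).det := by
  classical
  have hH := hR.1
  set U : Matrix (Fin n) (Fin n) ℝ := (hH.eigenvectorUnitary : Matrix (Fin n) (Fin n) ℝ) with hUdef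
  have hUU : U * star U = 1 := Matrix.mem_unitaryGroup_iff.mp hH.eigenvectorUnitary.2
  have key : 1 + R = U * (1 + diagonal (RCLike.ofReal ∘ hH.eigenvalues)) * (star U) := by
    rw [mul_add, add_mul, mul_one, ← (show R = U * diagonal (RCLike.ofReal ∘ hH.eigenvalues) * star U from hH.spectral_theorem), hUU]
  have hdetU : U.det * (star U).det = 1 := by
    rw [← det_mul, hUU, det_one]
  rw [key, det_mul, det_mul]
  set D : Matrix (Fin n) (Fin n) ℝ := diagonal (RCLike.ofReal ∘ hH.eigenvalues) with hDdef
  have hdiag : (1 + D).det = ∏ i, (1 + hH.eigenvalues i) := by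
    rw [hDdef, ← diagonal_one, diagonal_add, det_diagonal]
    simp
  have hd : (1 : ℝ) ≤ (1 + D).det := by
    rw [hdiag]
    have := Finset.prod_le_prod (s := Finset.univ) (f := fun _ : Fin n => (1 : ℝ))
      (g := fun i => 1 + hH.eigenvalues i) (fun i _ => by norm_num)
      (fun i _ => le_add_of_nonneg_right (hR.eigenvalues_nonneg i))
    simpa using this
  have hrw : U.det * (1 + D).det * (star U).det = (1 + D).det := by
    rw [mul_comm U.det, mul_assoc, hdetU, mul_one]
  rw [hrw]
  exact hd

-- if P is positive definite and Q positive semidefinite, det P ≤ det (P + Q)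
open scoped MatrixOrder in
lemma det_le_det_add {n : ℕ} {P Q : Matrix (Fin n) (Fin n) ℝ}
    (hP : P.PosDef) (hQ : Q.PosSemidef) : P.det ≤ (P + Q).det := by
  classical
  set S := CFC.sqrt P with hSdef
  have hSS : S * S = P := CFC.sqrt_mul_sqrt_self P hP.posSemidef.nonneg
  have hSherm : S.IsHermitian := (Matrix.nonneg_iff_posSemidef.mp (CFC.sqrt_nonneg P)).1
  have hdetP : 0 < P.det := hP.det_pos
  have hdetS : S.det ≠ 0 := by
    intro h
    rw [← hSS, det_mul, h, mul_zero] at hdetP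
    exact lt_irrefl _ hdetP
  have hSu : IsUnit S.det := isUnit_iff_ne_zero.mpr hdetS
  have hinvherm : (S⁻¹)ᴴ = S⁻¹ := by rw [conjTranspose_nonsing_inv, hSherm.eq]
  have hR : (S⁻¹ * Q * S⁻¹).PosSemidef := by
    have := hQ.conjTranspose_mul_mul_same (S⁻¹)
    rwa [hinvherm] at this
  have key : P + Q = S * (1 + S⁻¹ * Q * S⁻¹) * S := by
    rw [mul_add, add_mul, mul_one, hSS]
    congr 1
    rw [← mul_assoc, ← mul_assoc, mul_nonsing_inv _ hSu, one_mul, mul_assoc,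
      nonsing_inv_mul _ hSu, mul_one]
  have h1 : 1 ≤ (1 + S⁻¹ * Q * S⁻¹).det := one_le_det_one_add hR
  rw [key, det_mul, det_mul]
  have hSSdet : S.det * S.det = P.det := by rw [← det_mul, hSS]
  calc P.det = P.det * 1 := (mul_one _).symm
    _ ≤ P.det * (1 + S⁻¹ * Q * S⁻¹).det := mul_le_mul_of_nonneg_left h1 hdetP.le
    _ = S.det * (1 + S⁻¹ * Q * S⁻¹).det * S.det := by rw [← hSSdet]; ring

-- positive semidefinite with nonzero determinant is positive definite
lemma posDef_of_posSemidef_det_ne_zero {n : ℕ} {P : Matrix (Fin n) (Fin n) ℝ}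
    (hP : P.PosSemidef) (hdet : P.det ≠ 0) : P.PosDef := by
  refine posDef_iff_dotProduct_mulVec.mpr ⟨hP.1, fun x hx => lt_of_le_of_ne (hP.dotProduct_mulVec_nonneg x) fun h0 => hx ?_⟩
  have hPx : P *ᵥ x = 0 := (hP.dotProduct_mulVec_zero_iff x).mp h0.symm
  have : P⁻¹ *ᵥ (P *ᵥ x) = x := by
    rw [mulVec_mulVec, nonsing_inv_mul _ (isUnit_iff_ne_zero.mpr hdet), one_mulVec]
  rw [hPx, mulVec_zero] at this
  exact this.symm

theorem fischer_inequality {k m : ℕ}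
    (A : Matrix (Fin k) (Fin k) ℝ) (B : Matrix (Fin k) (Fin m) ℝ)
    (C : Matrix (Fin m) (Fin m) ℝ)
    (hM : (Matrix.fromBlocks A B Bᵀ C).PosDef) :
    (Matrix.fromBlocks A B Bᵀ C).det ≤ A.det * C.det := by
  classical
  have hBH : Bᴴ = Bᵀ := by ext i j; simp [conjTranspose_apply]
  -- C is positive definite
  have hCherm : C.IsHermitian := by
    have := congrArg Matrix.toBlocks₂₂ hM.1
    simpa [Matrix.fromBlocks_conjTranspose, Matrix.fromBlocks_transpose, Matrix.IsSymm, Matrix.toBlocks_fromBlocks₂₂] using this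
  have hC : C.PosDef := by
    refine posDef_iff_dotProduct_mulVec.mpr ⟨hCherm, fun x hx => ?_⟩
    have hy : (Sum.elim (0 : Fin k → ℝ) x) ≠ 0 := by
      intro h
      apply hx
      funext i
      exact congrFun h (Sum.inr i)
    have := (posDef_iff_dotProduct_mulVec.mp hM).2 hy
    have hstar : star (Sum.elim (0 : Fin k → ℝ) x) = Sum.elim (0 : Fin k → ℝ) (star x) := by
      funext i; cases i <;> simp [Pi.star_apply]
    rw [hstar] at this
    simpa [fromBlocks_mulVec, sumElim_dotProduct_sumElim, Sum.elim_comp_inl,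
      Sum.elim_comp_inr] using this
  -- A is positive definite
  have hAherm : A.IsHermitian := by
    have := congrArg Matrix.toBlocks₁₁ hM.1
    simpa [Matrix.fromBlocks_conjTranspose, Matrix.fromBlocks_transpose, Matrix.IsSymm, Matrix.toBlocks_fromBlocks₁₁] using this
  have hA : A.PosDef := by
    refine posDef_iff_dotProduct_mulVec.mpr ⟨hAherm, fun x hx => ?_⟩
    have hy : (Sum.elim x (0 : Fin m → ℝ)) ≠ 0 := by
      intro h
      apply hx
      funext i
      exact congrFun h (Sum.inl i)
    have := (posDef_iff_dotProduct_mulVec.mp hM).2 hy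
    have hstar : star (Sum.elim x (0 : Fin m → ℝ)) = Sum.elim (star x) (0 : Fin m → ℝ) := by
      funext i; cases i <;> simp [Pi.star_apply]
    rw [hstar] at this
    simpa [fromBlocks_mulVec, sumElim_dotProduct_sumElim, Sum.elim_comp_inl,
      Sum.elim_comp_inr] using this
  haveI : Invertible C := C.invertibleOfIsUnitDet hC.det_pos.ne'.isUnit
  have hdetM : (Matrix.fromBlocks A B Bᵀ C).det = C.det * (A - B * C⁻¹ * Bᵀ).det := by
    rw [det_fromBlocks₂₂, invOf_eq_nonsing_inv]
  -- Schur complement is positive semidefinite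
  have hSchur : (A - B * C⁻¹ * Bᵀ).PosSemidef := by
    have h := (PosDef.fromBlocks₂₂ A B hC).mp (by rw [hBH]; exact hM.posSemidef)
    rwa [hBH] at h
  -- S := B * C⁻¹ * Bᵀ is positive semidefinite
  have hS : (B * C⁻¹ * Bᵀ).PosSemidef := by
    have := hC.posSemidef.inv.mul_mul_conjTranspose_same B
    rwa [hBH] at this
  -- Schur complement is positive definite (its determinant is positive)
  have hdetSchur : 0 < (A - B * C⁻¹ * Bᵀ).det := by
    have h := hM.det_pos
    rw [hdetM] at h
    nlinarith [hC.det_pos]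
  have hSchurPD : (A - B * C⁻¹ * Bᵀ).PosDef :=
    posDef_of_posSemidef_det_ne_zero hSchur hdetSchur.ne'
  have hle : (A - B * C⁻¹ * Bᵀ).det ≤ A.det := by
    have := det_le_det_add hSchurPD hS
    rwa [sub_add_cancel] at this
  rw [hdetM, mul_comm]
  exact mul_le_mul_of_nonneg_right hle (le_of_lt hC.det_pos) |>.trans_eq rfl
end

section
/- If a partition P' of {1,...,n} refines a partition P, then for a positive definite matrix M, ∏_{s} det M_{P_s} ≤ ∏_{s'} det M_{P'_{s'}}; i.e., refining the partition gives a larger (looser) upper bound on det M. -/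
open Matrix

/-- Principal submatrix of `M` indexed by the finite set `s`. -/
def principalSub {n : ℕ} (M : Matrix (Fin n) (Fin n) ℝ) (s : Finset (Fin n)) :
    Matrix {x // x ∈ s} {x // x ∈ s} ℝ :=
  M.submatrix (fun i => i.1) (fun j => j.1)

section Aux

variable {m p : Type*} [Fintype m] [DecidableEq m] [Fintype p] [DecidableEq p]

lemma psd_det_nonneg {A : Matrix m m ℝ} (hA : A.PosSemidef) : 0 ≤ A.det := by
  rw [hA.1.det_eq_prod_eigenvalues]
  exact Finset.prod_nonneg fun i _ => by exact_mod_cast hA.eigenvalues_nonneg i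

lemma psd_posDef_of_det_ne_zero {A : Matrix m m ℝ} (hA : A.PosSemidef)
    (h : A.det ≠ 0) : A.PosDef := by
  refine posDef_iff_dotProduct_mulVec.mpr ⟨hA.1, fun x hx => ?_⟩
  rcases lt_or_eq_of_le (hA.dotProduct_mulVec_nonneg x) with h' | h'
  · exact h'
  · exfalso
    have h0 : A *ᵥ x = 0 := (hA.dotProduct_mulVec_zero_iff x).mp h'.symm
    have : x = 0 := by
      have := congrArg (fun v => A⁻¹ *ᵥ v) h0
      simpa [Matrix.mulVec_mulVec, Matrix.nonsing_inv_mul A (isUnit_iff_ne_zero.2 h),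
        Matrix.mulVec_zero] using this
    exact hx this

lemma one_le_det_one_add_s3 {Q : Matrix m m ℝ} (hQ : Q.PosSemidef) :
    1 ≤ (1 + Q).det := by
  have h : (1 + Q : Matrix m m ℝ).IsHermitian := isHermitian_one.add hQ.1
  have hev : ∀ i, 1 ≤ h.eigenvalues i := by
    intro i
    set v : EuclideanSpace ℝ m := h.eigenvectorBasis i with hv
    have hnorm : ‖v‖ = 1 := h.eigenvectorBasis.orthonormal.1 i
    have h1 : star (⇑v) ⬝ᵥ (⇑v) = 1 := by
      have : (inner ℝ v v : ℝ) = 1 := by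
        rw [real_inner_self_eq_norm_sq, hnorm]; norm_num
      rw [← this]
      rw [EuclideanSpace.inner_eq_star_dotProduct]; exact dotProduct_comm _ _
    have := h.eigenvalues_eq i
    rw [this]
    have hexp : ((1 + Q) *ᵥ ⇑v) = ⇑v + Q *ᵥ ⇑v := by
      rw [add_mulVec, one_mulVec]
    rw [hexp, dotProduct_add, h1]
    have := hQ.dotProduct_mulVec_nonneg (⇑v)
    simpa using this
  rw [h.det_eq_prod_eigenvalues]
  have : ∏ _i : m, (1:ℝ) ≤ ∏ i, h.eigenvalues i :=
    Finset.prod_le_prod (by simp) (fun i _ => hev i)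
  simpa using this

open scoped MatrixOrder in
lemma det_le_det_add_s3 {S T : Matrix m m ℝ} (hS : S.PosSemidef) (hT : T.PosSemidef) :
    S.det ≤ (S + T).det := by
  by_cases hdet : S.det = 0
  · rw [hdet]; exact psd_det_nonneg (hS.add hT)
  · have hSpd : S.PosDef := psd_posDef_of_det_ne_zero hS hdet
    have hSiu : IsUnit S.det := isUnit_iff_ne_zero.2 hdet
    have key : S + T = S * (1 + S⁻¹ * T) := by
      rw [mul_add, mul_one, ← mul_assoc, Matrix.mul_nonsing_inv _ hSiu, one_mul]
    rw [key, det_mul]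
    have hR : (1 + S⁻¹ * T).det = (1 + CFC.sqrt T * S⁻¹ * CFC.sqrt T).det := by
      have h1 : S⁻¹ * T = (S⁻¹ * CFC.sqrt T) * CFC.sqrt T := by
        rw [mul_assoc, CFC.sqrt_mul_sqrt_self T (Matrix.nonneg_iff_posSemidef.mpr hT)]
      rw [h1, Matrix.det_one_add_mul_comm, ← mul_assoc]
    have hQpsd : (CFC.sqrt T * S⁻¹ * CFC.sqrt T).PosSemidef := by
      have := hSpd.inv.posSemidef.mul_mul_conjTranspose_same (CFC.sqrt T)
      rwa [(Matrix.nonneg_iff_posSemidef.mp (CFC.sqrt_nonneg T)).1.eq] at this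
    calc S.det = S.det * 1 := (mul_one _).symm
    _ ≤ S.det * (1 + S⁻¹ * T).det := by
        apply mul_le_mul_of_nonneg_left _ (le_of_lt hSpd.det_pos)
        rw [hR]; exact one_le_det_one_add_s3 hQpsd

omit [DecidableEq m] in
lemma posDef_submatrix_of_injective {M : Matrix p p ℝ} (hM : M.PosDef) (e : m → p)
    (he : Function.Injective e) : (M.submatrix e e).PosDef := by
  refine posDef_iff_dotProduct_mulVec.mpr ⟨hM.1.submatrix e, fun x hx => ?_⟩
  classical
  set B : Matrix p m ℝ := (1 : Matrix p p ℝ).submatrix id e with hB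
  have hBx : ∀ i, (B *ᵥ x) (e i) = x i := by
    intro i
    simp only [hB, mulVec, dotProduct, submatrix_apply, id_eq, one_apply]
    rw [Finset.sum_eq_single i]
    · simp
    · intro j _ hj
      simp [he.ne (Ne.symm hj)]
    · simp
  have hsub : M.submatrix e e = Bᴴ * M * B := by
    rw [hB, conjTranspose_submatrix, conjTranspose_one]
    nth_rewrite 1 [(by simp : M = 1 * M * 1)]
    rw [Matrix.submatrix_mul (e₂ := id) (he₂ := Function.bijective_id),
      Matrix.submatrix_mul (e₂ := id) (he₂ := Function.bijective_id), submatrix_id_id]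
  have hBxne : B *ᵥ x ≠ 0 := by
    obtain ⟨i, hi⟩ := Function.ne_iff.mp hx
    intro h0
    exact hi (by rw [← hBx i, h0]; rfl)
  rw [hsub]
  simpa only [star_mulVec, dotProduct_mulVec, vecMul_vecMul] using hM.dotProduct_mulVec_pos hBxne

lemma fischer_blocks (N : Matrix (m ⊕ p) (m ⊕ p) ℝ) (hN : N.PosDef) :
    N.det ≤ N.toBlocks₁₁.det * N.toBlocks₂₂.det := by
  set A := N.toBlocks₁₁
  set B := N.toBlocks₁₂
  set C := N.toBlocks₂₁
  set D := N.toBlocks₂₂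
  have hNblocks : N = fromBlocks A B C D := (fromBlocks_toBlocks N).symm
  have hA : A.PosDef := posDef_submatrix_of_injective hN Sum.inl Sum.inl_injective
  have hD : D.PosDef := posDef_submatrix_of_injective hN Sum.inr Sum.inr_injective
  have hC : C = Bᴴ := by
    have := hN.1
    ext i j
    have := congrFun (congrFun this.eq (Sum.inr i)) (Sum.inl j)
    simpa [conjTranspose_apply, A, B, C, D, toBlocks₂₁, toBlocks₁₂] using this.symm
  haveI : Invertible A := A.invertibleOfIsUnitDet hA.det_pos.ne'.isUnit
  have hdet : N.det = A.det * (D - Bᴴ * A⁻¹ * B).det := by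
    rw [hNblocks, hC, det_fromBlocks₁₁]
    congr 2
    rw [Matrix.invOf_eq_nonsing_inv]
  have hschur : (D - Bᴴ * A⁻¹ * B).PosSemidef := by
    rw [← Matrix.PosDef.fromBlocks₁₁ B D hA]
    rw [hNblocks, hC] at hN
    exact hN.posSemidef
  have hBAB : (Bᴴ * A⁻¹ * B).PosSemidef := hA.inv.posSemidef.conjTranspose_mul_mul_same B
  have hle : (D - Bᴴ * A⁻¹ * B).det ≤ D.det := by
    have := det_le_det_add_s3 hschur hBAB
    rwa [sub_add_cancel] at this
  rw [hdet]
  calc A.det * (D - Bᴴ * A⁻¹ * B).det ≤ A.det * D.det :=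
        mul_le_mul_of_nonneg_left hle hA.det_pos.le

end Aux

lemma principalSub_posDef {n : ℕ} {M : Matrix (Fin n) (Fin n) ℝ} (hM : M.PosDef)
    (s : Finset (Fin n)) : (principalSub M s).PosDef :=
  posDef_submatrix_of_injective hM _ Subtype.val_injective

lemma principalSub_union_det_le {n : ℕ} {M : Matrix (Fin n) (Fin n) ℝ} (hM : M.PosDef)
    {s t : Finset (Fin n)} (hst : Disjoint s t) :
    (principalSub M (s ∪ t)).det ≤ (principalSub M s).det * (principalSub M t).det := by
  classical
  set g : {x // x ∈ s} ⊕ {x // x ∈ t} → Fin n := Sum.elim Subtype.val Subtype.val with hg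
  have hginj : Function.Injective g := by
    rintro (⟨a, ha⟩ | ⟨a, ha⟩) (⟨b, hb⟩ | ⟨b, hb⟩) hab <;>
      simp only [hg, Sum.elim_inl, Sum.elim_inr] at hab <;> subst hab
    · rfl
    · exact (Finset.disjoint_left.mp hst ha hb).elim
    · exact (Finset.disjoint_left.mp hst hb ha).elim
    · rfl
  set N := M.submatrix g g with hN
  have hNpd : N.PosDef := posDef_submatrix_of_injective hM g hginj
  have h11 : N.toBlocks₁₁ = principalSub M s := rfl
  have h22 : N.toBlocks₂₂ = principalSub M t := rfl
  let e : ({x // x ∈ s} ⊕ {x // x ∈ t}) ≃ {x // x ∈ s ∪ t} := by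
    refine ⟨fun a => ⟨g a, ?_⟩, fun x => if h : x.1 ∈ s then Sum.inl ⟨x.1, h⟩ else
      Sum.inr ⟨x.1, (Finset.mem_union.mp x.2).resolve_left h⟩, ?_, ?_⟩
    · rcases a with ⟨a, ha⟩ | ⟨a, ha⟩ <;> simp [hg, Finset.mem_union, ha]
    · rintro (⟨a, ha⟩ | ⟨a, ha⟩)
      · simp [hg, ha]
      · have : a ∉ s := Finset.disjoint_right.mp hst ha
        simp [hg, this]
    · rintro ⟨x, hx⟩
      by_cases h : x ∈ s <;> simp [hg, h]
  have hdet : N.det = (principalSub M (s ∪ t)).det := by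
    have : N = (principalSub M (s ∪ t)).submatrix e e := by
      ext a b
      rcases a with a | a <;> rcases b with b | b <;>
        simp [hN, e, hg, principalSub, Matrix.submatrix_apply]
    rw [this, Matrix.det_submatrix_equiv_self]
  calc (principalSub M (s ∪ t)).det = N.det := hdet.symm
    _ ≤ N.toBlocks₁₁.det * N.toBlocks₂₂.det := fischer_blocks N hNpd
    _ = _ := by rw [h11, h22]

lemma principalSub_sup_det_le {n : ℕ} {M : Matrix (Fin n) (Fin n) ℝ} (hM : M.PosDef)
    (F : Finset (Finset (Fin n)))
    (hdisj : (F : Set (Finset (Fin n))).PairwiseDisjoint id) :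
    (principalSub M (F.sup id)).det ≤ ∏ u ∈ F, (principalSub M u).det := by
  classical
  induction F using Finset.cons_induction with
  | empty =>
    haveI : IsEmpty {x // x ∈ ((∅ : Finset (Finset (Fin n))).sup id)} := by
      constructor; rintro ⟨x, hx⟩; simp at hx
    simp [Matrix.det_isEmpty]
  | cons u F hu ih =>
    have hdisj' : (F : Set (Finset (Fin n))).PairwiseDisjoint id :=
      hdisj.subset (by simp [Finset.coe_cons, Set.subset_insert])
    have hud : Disjoint u (F.sup id) := by
      rw [Finset.disjoint_sup_right]
      intro v hv
      exact hdisj (by simp) (by simp [hv]) (fun h => hu (h ▸ hv))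
    have hsup : (Finset.cons u F hu).sup id = u ∪ F.sup id := by
      rw [Finset.sup_cons]; rfl
    rw [hsup, Finset.prod_cons]
    calc (principalSub M (u ∪ F.sup id)).det
        ≤ (principalSub M u).det * (principalSub M (F.sup id)).det :=
          principalSub_union_det_le hM hud
      _ ≤ (principalSub M u).det * ∏ v ∈ F, (principalSub M v).det :=
          mul_le_mul_of_nonneg_left (ih hdisj') (principalSub_posDef hM u).det_pos.le

theorem refinement_looser_bound {n : ℕ} (M : Matrix (Fin n) (Fin n) ℝ) (hM : M.PosDef)
    (P P' : Finpartition (Finset.univ : Finset (Fin n)))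
    (hrefine : ∀ s' ∈ P'.parts, ∃ s ∈ P.parts, s' ⊆ s) :
    ∏ s ∈ P.parts, (principalSub M s).det ≤ ∏ s' ∈ P'.parts, (principalSub M s').det := by
  classical
  choose f hf1 hf2 using hrefine
  set g : Finset (Fin n) → Finset (Fin n) :=
    fun s' => if h : s' ∈ P'.parts then f s' h else ∅ with hgdef
  have hmaps : ∀ s' ∈ P'.parts, g s' ∈ P.parts := by
    intro s' h; simp only [hgdef, dif_pos h]; exact hf1 s' h
  have hsubg : ∀ s' ∈ P'.parts, s' ⊆ g s' := by
    intro s' h; simp only [hgdef, dif_pos h]; exact hf2 s' h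
  rw [← Finset.prod_fiberwise_of_maps_to hmaps (fun s' => (principalSub M s').det)]
  apply Finset.prod_le_prod
  · intro s _
    exact (principalSub_posDef hM s).det_pos.le
  · intro s hs
    set F := P'.parts.filter (fun s' => g s' = s) with hF
    have hFdisj : (F : Set (Finset (Fin n))).PairwiseDisjoint id :=
      P'.disjoint.subset (by simp only [hF, Finset.coe_filter]; exact fun x hx => hx.1)
    have hFsup : F.sup id = s := by
      apply le_antisymm
      · apply Finset.sup_le
        intro v hv
        rw [hF, Finset.mem_filter] at hv
        exact hv.2 ▸ hsubg v hv.1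
      · intro x hx
        have hxu : x ∈ P'.parts.sup id := by rw [P'.sup_parts]; exact Finset.mem_univ x
        obtain ⟨s'', hs'', hxs''⟩ := Finset.mem_sup.mp hxu
        have hgs : g s'' = s := by
          apply P.disjoint.elim (hmaps s'' hs'') hs
          rw [Finset.not_disjoint_iff]
          exact ⟨x, hsubg s'' hs'' hxs'', hx⟩
        apply Finset.mem_sup.mpr
        exact ⟨s'', Finset.mem_filter.mpr ⟨hs'', hgs⟩, hxs''⟩
    calc (principalSub M s).det = (principalSub M (F.sup id)).det := by rw [hFsup]
      _ ≤ ∏ v ∈ F, (principalSub M v).det := principalSub_sup_det_le hM F hFdisj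
end

section
/- Let J ∈ ℝ^{m×p}, Λ ∈ ℝ^{m×m} positive semidefinite, P₀ ∈ ℝ^{p×p} positive definite. Then -log det(Jᵀ Λ J + P₀) ≥ -log det P₀ - log det(J P₀⁻¹ Jᵀ Λ + I_m), with equality; and if the row indices {1,...,m} are partitioned into blocks B₁,...,B_M with J_{B_j} the corresponding row-submatrices and Λ block-diagonal with blocks Λ_{B_j}, then -log det(Jᵀ Λ J + P₀) ≥ -log det P₀ - Σ_j log det(J_{B_j} P₀⁻¹ J_{B_j}ᵀ Λ_{B_j} + I). -/
open Matrix

/-- Rows of `J` indexed by the finite set `s`. -/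
def rowSub {m p : ℕ} (J : Matrix (Fin m) (Fin p) ℝ) (s : Finset (Fin m)) :
    Matrix {x // x ∈ s} (Fin p) ℝ :=
  J.submatrix (fun i => i.1) id

variable {n : Type*} [Fintype n] [DecidableEq n]

lemma one_le_det_one_add_s6 {E : Matrix n n ℝ} (hE : E.PosSemidef) :
    1 ≤ ((1 : Matrix n n ℝ) + E).det := by
  have hU : (hE.1.eigenvectorUnitary : Matrix n n ℝ) * star (hE.1.eigenvectorUnitary : Matrix n n ℝ) = 1 :=
    (Matrix.mem_unitaryGroup_iff).mp (hE.1.eigenvectorUnitary).2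
  set U := (hE.1.eigenvectorUnitary : Matrix n n ℝ) with hUdef
  set d := RCLike.ofReal (K := ℝ) ∘ hE.1.eigenvalues with hd
  have key : (1 : Matrix n n ℝ) + E = U * (1 + diagonal d) * star U := by
    rw [Matrix.mul_add, Matrix.add_mul, Matrix.mul_one, hU]
    congr 1
    exact hE.1.spectral_theorem
  have hU' : U.det * (star U).det = 1 := by rw [← det_mul, hU, det_one]
  have hdet : ((1 : Matrix n n ℝ) + E).det = (1 + diagonal d).det := by
    rw [key, det_mul, det_mul, mul_comm U.det, mul_assoc, hU', mul_one]
  rw [hdet]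
  have h2 : (1 : Matrix n n ℝ) + diagonal d = diagonal (fun i => 1 + d i) := by
    rw [← diagonal_one, diagonal_add]
  rw [h2, det_diagonal]
  calc (1:ℝ) = ∏ _i : n, 1 := by simp
    _ ≤ ∏ i : n, (1 + d i) := by
        refine Finset.prod_le_prod (fun i _ => zero_le_one) (fun i _ => ?_)
        have := hE.eigenvalues_nonneg i
        simp only [hd, Function.comp_apply]
        norm_num
        linarith

open scoped MatrixOrder in
lemma det_le_det_add_s6 {X D : Matrix n n ℝ} (hX : X.PosDef) (hD : D.PosSemidef) :
    X.det ≤ (X + D).det := by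
  set Q := CFC.sqrt X with hQdef
  have hQpsd : Q.PosSemidef := Matrix.nonneg_iff_posSemidef.mp (CFC.sqrt_nonneg X)
  have hQQ : Q * Q = X := CFC.sqrt_mul_sqrt_self X (Matrix.nonneg_iff_posSemidef.mpr hX.posSemidef)
  have hdetQ : Q.det * Q.det = X.det := by rw [← det_mul, hQQ]
  have hQdet : IsUnit Q.det := by
    refine isUnit_iff_ne_zero.mpr fun h => ?_
    rw [h, mul_zero] at hdetQ
    exact hX.det_pos.ne (by rw [hdetQ])
  have hQherm : Q⁻¹ᴴ = Q⁻¹ := hQpsd.inv.isHermitian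
  have hE : (Q⁻¹ * D * Q⁻¹).PosSemidef := by
    have := hD.conjTranspose_mul_mul_same Q⁻¹
    rwa [hQherm] at this
  have key : X + D = Q * (1 + Q⁻¹ * D * Q⁻¹) * Q := by
    rw [Matrix.mul_add, Matrix.mul_one, Matrix.add_mul, hQQ]
    congr 1
    calc D = (Q * Q⁻¹) * D * (Q⁻¹ * Q) := by
          rw [Matrix.mul_nonsing_inv _ hQdet, Matrix.nonsing_inv_mul _ hQdet,
            Matrix.one_mul, Matrix.mul_one]
      _ = Q * (Q⁻¹ * D * Q⁻¹) * Q := by simp only [Matrix.mul_assoc]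
  have h1 : 1 ≤ (1 + Q⁻¹ * D * Q⁻¹).det := one_le_det_one_add_s6 hE
  calc X.det = X.det * 1 := (mul_one _).symm
    _ ≤ X.det * (1 + Q⁻¹ * D * Q⁻¹).det := by
        exact mul_le_mul_of_nonneg_left h1 hX.det_pos.le
    _ = (X + D).det := by
        rw [key, det_mul, det_mul, ← hdetQ]
        ring

lemma inv_sub_inv_posSemidef {X A : Matrix n n ℝ} (hX : X.PosDef) (hA : A.PosSemidef) :
    (X⁻¹ - (X + A)⁻¹).PosSemidef := by
  set R := X + A with hR
  have hRpd : R.PosDef := hX.add_posSemidef hA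
  have hXu : IsUnit X.det := isUnit_iff_ne_zero.mpr hX.det_pos.ne'
  have hRu : IsUnit R.det := isUnit_iff_ne_zero.mpr hRpd.det_pos.ne'
  have hMid : (A + A * X⁻¹ * A).PosSemidef := by
    refine hA.add ?_
    have := hX.posSemidef.inv.conjTranspose_mul_mul_same A
    rwa [hA.isHermitian.eq] at this
  have hRinv : R⁻¹ᴴ = R⁻¹ := hRpd.posSemidef.inv.isHermitian
  have c1 : A + A * X⁻¹ * A = A * X⁻¹ * R := by
    rw [hR, Matrix.mul_add, Matrix.mul_assoc A X⁻¹ X, Matrix.nonsing_inv_mul _ hXu,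
      Matrix.mul_one]
  have key : X⁻¹ - R⁻¹ = R⁻¹ * (A + A * X⁻¹ * A) * R⁻¹ := by
    rw [c1, ← Matrix.mul_assoc R⁻¹ (A * X⁻¹) R, Matrix.mul_nonsing_inv_cancel_right _ _ hRu]
    have e2 : A = R - X := by rw [hR]; abel
    rw [e2, Matrix.sub_mul, Matrix.mul_sub, Matrix.mul_nonsing_inv _ hXu,
      ← Matrix.mul_assoc, Matrix.nonsing_inv_mul _ hRu, Matrix.one_mul, Matrix.mul_one]
  rw [key]
  have := hMid.conjTranspose_mul_mul_same R⁻¹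
  rwa [hRinv] at this

open scoped MatrixOrder in
lemma det_add_add_mul_le {X A C : Matrix n n ℝ} (hX : X.PosDef) (hA : A.PosSemidef)
    (hC : C.PosSemidef) :
    (X + A + C).det * X.det ≤ (X + A).det * (X + C).det := by
  set R := X + A with hRdef
  have hRpd : R.PosDef := hX.add_posSemidef hA
  have hXu : IsUnit X.det := isUnit_iff_ne_zero.mpr hX.det_pos.ne'
  have hRu : IsUnit R.det := isUnit_iff_ne_zero.mpr hRpd.det_pos.ne'
  set S := CFC.sqrt C with hSdef
  have hSpsd : S.PosSemidef := Matrix.nonneg_iff_posSemidef.mp (CFC.sqrt_nonneg C)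
  have hSS : S * S = C := CFC.sqrt_mul_sqrt_self C (Matrix.nonneg_iff_posSemidef.mpr hC)
  -- k1 : (X + A + C).det = R.det * (1 + S * R⁻¹ * S).det
  have k1 : (X + A + C).det = R.det * (1 + S * R⁻¹ * S).det := by
    have e : X + A + C = R * (1 + R⁻¹ * S * S) := by
      rw [Matrix.mul_add, Matrix.mul_one, ← Matrix.mul_assoc, ← Matrix.mul_assoc,
        Matrix.mul_nonsing_inv _ hRu, Matrix.one_mul, hSS]
    rw [e, det_mul, Matrix.mul_assoc, det_one_add_mul_comm, Matrix.mul_assoc, det_one_add_mul_comm]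
  have k2 : (X + C).det = X.det * (1 + S * X⁻¹ * S).det := by
    have e : X + C = X * (1 + X⁻¹ * S * S) := by
      rw [Matrix.mul_add, Matrix.mul_one, ← Matrix.mul_assoc, ← Matrix.mul_assoc,
        Matrix.mul_nonsing_inv _ hXu, Matrix.one_mul, hSS]
    rw [e, det_mul, Matrix.mul_assoc, det_one_add_mul_comm, Matrix.mul_assoc, det_one_add_mul_comm]
  have hdiff : (X⁻¹ - R⁻¹).PosSemidef := inv_sub_inv_posSemidef hX hA
  have hSRS : (S * R⁻¹ * S).PosSemidef := by
    have := hRpd.posSemidef.inv.conjTranspose_mul_mul_same S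
    rwa [hSpsd.isHermitian.eq] at this
  have hSdS : (S * (X⁻¹ - R⁻¹) * S).PosSemidef := by
    have := hdiff.conjTranspose_mul_mul_same S
    rwa [hSpsd.isHermitian.eq] at this
  have k3 : (1 + S * R⁻¹ * S).det ≤ (1 + S * X⁻¹ * S).det := by
    have h1 : ((1 : Matrix n n ℝ) + S * R⁻¹ * S).PosDef :=
      Matrix.PosDef.add_posSemidef Matrix.PosDef.one hSRS
    have e : (1 : Matrix n n ℝ) + S * X⁻¹ * S = (1 + S * R⁻¹ * S) + S * (X⁻¹ - R⁻¹) * S := by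
      rw [Matrix.mul_sub, Matrix.sub_mul, add_assoc]
      congr 1
      abel
    rw [e]
    exact det_le_det_add_s6 h1 hSdS
  have h1pos : 0 ≤ (1 + S * R⁻¹ * S).det :=
    (Matrix.PosDef.add_posSemidef Matrix.PosDef.one hSRS).det_pos.le
  rw [k1, k2]
  calc R.det * (1 + S * R⁻¹ * S).det * X.det
      = (R.det * X.det) * (1 + S * R⁻¹ * S).det := by ring
    _ ≤ (R.det * X.det) * (1 + S * X⁻¹ * S).det := by
        exact mul_le_mul_of_nonneg_left k3 (mul_nonneg hRpd.det_pos.le hX.det_pos.le)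
    _ = R.det * (X.det * (1 + S * X⁻¹ * S).det) := by ring

lemma posSemidef_sum {ι : Type*} (t : Finset ι) (A : ι → Matrix n n ℝ)
    (hA : ∀ s ∈ t, (A s).PosSemidef) : (∑ s ∈ t, A s).PosSemidef := by
  classical
  induction t using Finset.induction_on with
  | empty => simpa using Matrix.PosSemidef.zero
  | insert _ _ hb ih =>
    rw [Finset.sum_insert hb]
    exact (hA _ (Finset.mem_insert_self _ _)).add
      (ih fun s hs => hA s (Finset.mem_insert_of_mem hs))

lemma det_add_sum_le {ι : Type*} [DecidableEq ι] (t : Finset ι) (A : ι → Matrix n n ℝ)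
    {X : Matrix n n ℝ} (hX : X.PosDef) (hA : ∀ s ∈ t, (A s).PosSemidef) :
    (X + ∑ s ∈ t, A s).det * X.det ^ t.card ≤ X.det * ∏ s ∈ t, (X + A s).det := by
  induction t using Finset.induction_on with
  | empty => simp
  | @insert a t ha ih =>
    have hAa : (A a).PosSemidef := hA a (Finset.mem_insert_self a t)
    have hAt : ∀ s ∈ t, (A s).PosSemidef := fun s hs => hA s (Finset.mem_insert_of_mem hs)
    have hsum : (∑ s ∈ t, A s).PosSemidef := posSemidef_sum t A hAt
    have key : (X + A a + ∑ s ∈ t, A s).det * X.det ≤ (X + A a).det * (X + ∑ s ∈ t, A s).det :=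
      det_add_add_mul_le hX hAa hsum
    have ih' := ih hAt
    have hXa : 0 ≤ (X + A a).det := (hX.add_posSemidef hAa).det_pos.le
    have hXd : 0 ≤ X.det := hX.det_pos.le
    rw [Finset.sum_insert ha, Finset.prod_insert ha, Finset.card_insert_of_notMem ha]
    have e : X + (A a + ∑ s ∈ t, A s) = X + A a + ∑ s ∈ t, A s := by abel
    rw [e, pow_succ]
    calc (X + A a + ∑ s ∈ t, A s).det * (X.det ^ t.card * X.det)
        = ((X + A a + ∑ s ∈ t, A s).det * X.det) * X.det ^ t.card := by ring
      _ ≤ ((X + A a).det * (X + ∑ s ∈ t, A s).det) * X.det ^ t.card := by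
          exact mul_le_mul_of_nonneg_right key (pow_nonneg hXd _)
      _ = (X + A a).det * ((X + ∑ s ∈ t, A s).det * X.det ^ t.card) := by ring
      _ ≤ (X + A a).det * (X.det * ∏ s ∈ t, (X + A s).det) := by
          exact mul_le_mul_of_nonneg_left ih' hXa
      _ = X.det * ((X + A a).det * ∏ s ∈ t, (X + A s).det) := by ring

lemma aux_det {q : Type*} [Fintype q] [DecidableEq q] {P : Matrix n n ℝ} (hP : P.PosDef)
    (X : Matrix q n ℝ) (L : Matrix q q ℝ) :
    (Xᵀ * L * X + P).det = P.det * (X * P⁻¹ * Xᵀ * L + 1).det := by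
  have hPu : IsUnit P.det := isUnit_iff_ne_zero.mpr hP.det_pos.ne'
  have e1 : X * P⁻¹ * Xᵀ * L = X * (P⁻¹ * Xᵀ * L) := by simp only [Matrix.mul_assoc]
  rw [e1, det_mul_add_one_comm]
  have e2 : P * (P⁻¹ * Xᵀ * L * X + 1) = Xᵀ * L * X + P := by
    rw [Matrix.mul_add, Matrix.mul_one]
    congr 1
    simp only [Matrix.mul_assoc]
    rw [Matrix.mul_nonsing_inv_cancel_left _ _ hPu]
  rw [← e2, det_mul]

lemma sum_decomp {m p : ℕ}
    (J : Matrix (Fin m) (Fin p) ℝ) (Λ : Matrix (Fin m) (Fin m) ℝ)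
    (B : Finpartition (Finset.univ : Finset (Fin m)))
    (hblock : ∀ i j : Fin m, (∀ s ∈ B.parts, i ∈ s → j ∉ s) → Λ i j = 0) :
    Jᵀ * Λ * J = ∑ s ∈ B.parts, (rowSub J s)ᵀ * principalSub Λ s * rowSub J s := by
  classical
  ext a b
  have hexp : ∀ s : Finset (Fin m),
      ((rowSub J s)ᵀ * principalSub Λ s * rowSub J s) a b
        = ∑ j ∈ s, ∑ i ∈ s, J i a * Λ i j * J j b := by
    intro s
    rw [mul_apply]
    rw [← Finset.sum_coe_sort s (fun j => ∑ i ∈ s, J i a * Λ i j * J j b)]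
    refine Finset.sum_congr rfl fun j _ => ?_
    rw [mul_apply, Finset.sum_mul]
    rw [← Finset.sum_coe_sort s (fun i => J i a * Λ i j * J j b)]
    refine Finset.sum_congr rfl fun i _ => ?_
    simp [rowSub, principalSub, mul_assoc]
  have hlhs : (Jᵀ * Λ * J) a b = ∑ j : Fin m, ∑ i : Fin m, J i a * Λ i j * J j b := by
    rw [mul_apply]
    refine Finset.sum_congr rfl fun j _ => ?_
    rw [mul_apply, Finset.sum_mul]
    refine Finset.sum_congr rfl fun i _ => ?_
    simp [mul_assoc]
  rw [Matrix.sum_apply, hlhs]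
  simp only [hexp]
  have hU : (Finset.univ : Finset (Fin m)) = B.parts.biUnion id := by
    exact B.sup_parts.symm.trans (Finset.sup_eq_biUnion _ _)
  rw [Finset.sum_congr hU (fun _ _ => rfl), Finset.sum_biUnion (B.supIndep.pairwiseDisjoint)]
  refine Finset.sum_congr rfl fun s hs => ?_
  refine Finset.sum_congr rfl fun j hj => ?_
  symm
  refine Finset.sum_subset (Finset.subset_univ s) fun i _ hi => ?_
  have hz : Λ i j = 0 := by
    refine hblock i j fun s' hs' his' hjs' => ?_
    exact hi (B.eq_of_mem_parts hs' hs hjs' hj ▸ his')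
  simp [hz]

theorem data_subset_lower_bound {m p : ℕ}
    (J : Matrix (Fin m) (Fin p) ℝ) (Λ : Matrix (Fin m) (Fin m) ℝ)
    (P₀ : Matrix (Fin p) (Fin p) ℝ)
    (hΛ : Λ.PosSemidef) (hP : P₀.PosDef)
    (B : Finpartition (Finset.univ : Finset (Fin m)))
    (hblock : ∀ i j : Fin m, (∀ s ∈ B.parts, i ∈ s → j ∉ s) → Λ i j = 0) :
    (-Real.log (Jᵀ * Λ * J + P₀).det =
        -Real.log P₀.det - Real.log (J * P₀⁻¹ * Jᵀ * Λ + 1).det) ∧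
    -Real.log (Jᵀ * Λ * J + P₀).det ≥
      -Real.log P₀.det -
        ∑ s ∈ B.parts,
          Real.log ((rowSub J s * P₀⁻¹ * (rowSub J s)ᵀ * principalSub Λ s + 1).det) := by
  classical
  have hJt : (Jᵀ * Λ * J).PosSemidef := by
    have := hΛ.conjTranspose_mul_mul_same J
    rwa [conjTranspose_eq_transpose_of_trivial] at this
  have hT : (Jᵀ * Λ * J + P₀).PosDef := Matrix.PosDef.posSemidef_add hJt hP
  have hd : 0 < P₀.det := hP.det_pos
  have heq : (Jᵀ * Λ * J + P₀).det = P₀.det * (J * P₀⁻¹ * Jᵀ * Λ + 1).det := aux_det hP J Λ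
  have hDpos : 0 < (J * P₀⁻¹ * Jᵀ * Λ + 1).det := by
    have h := hT.det_pos
    rw [heq] at h
    rcases mul_pos_iff.mp h with ⟨_, h2⟩ | ⟨h1, _⟩
    · exact h2
    · linarith
  constructor
  · rw [heq, Real.log_mul hd.ne' hDpos.ne']
    ring
  -- inequality part
  set A : Finset (Fin m) → Matrix (Fin p) (Fin p) ℝ :=
    fun s => (rowSub J s)ᵀ * principalSub Λ s * rowSub J s with hAdef
  have hAs : ∀ s : Finset (Fin m), (A s).PosSemidef := by
    intro s
    have hps : (principalSub Λ s).PosSemidef := by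
      unfold principalSub
      exact hΛ.submatrix _
    have := hps.conjTranspose_mul_mul_same (rowSub J s)
    rwa [conjTranspose_eq_transpose_of_trivial] at this
  have hsum : Jᵀ * Λ * J = ∑ s ∈ B.parts, A s := sum_decomp J Λ B hblock
  have key := det_add_sum_le B.parts A hP (fun s _ => hAs s)
  set term : Finset (Fin m) → ℝ :=
    fun s => ((rowSub J s * P₀⁻¹ * (rowSub J s)ᵀ * principalSub Λ s + 1).det) with htermdef
  have hterm : ∀ s : Finset (Fin m), (P₀ + A s).det = P₀.det * term s := by
    intro s
    rw [add_comm]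
    exact aux_det hP (rowSub J s) (principalSub Λ s)
  have htermpos : ∀ s : Finset (Fin m), 0 < term s := by
    intro s
    have h := (hP.add_posSemidef (hAs s)).det_pos
    rw [hterm s] at h
    rcases mul_pos_iff.mp h with ⟨_, h2⟩ | ⟨h1, _⟩
    · exact h2
    · linarith
  have hprod : ∏ s ∈ B.parts, (P₀ + A s).det
      = P₀.det ^ B.parts.card * ∏ s ∈ B.parts, term s := by
    rw [Finset.prod_congr rfl (fun s _ => hterm s), Finset.prod_mul_distrib,
      Finset.prod_const]
  have hEq2 : Jᵀ * Λ * J + P₀ = P₀ + ∑ s ∈ B.parts, A s := by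
    rw [hsum, add_comm]
  rw [hEq2] at hT heq ⊢
  rw [hprod] at key
  have hk : 0 < P₀.det ^ B.parts.card := pow_pos hd _
  have hle : (P₀ + ∑ s ∈ B.parts, A s).det ≤ P₀.det * ∏ s ∈ B.parts, term s := by
    have h2 : (P₀ + ∑ s ∈ B.parts, A s).det * P₀.det ^ B.parts.card
        ≤ (P₀.det * ∏ s ∈ B.parts, term s) * P₀.det ^ B.parts.card := by
      calc (P₀ + ∑ s ∈ B.parts, A s).det * P₀.det ^ B.parts.card
          ≤ P₀.det * (P₀.det ^ B.parts.card * ∏ s ∈ B.parts, term s) := key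
        _ = (P₀.det * ∏ s ∈ B.parts, term s) * P₀.det ^ B.parts.card := by ring
    exact le_of_mul_le_mul_right h2 hk
  have hprodpos : 0 < ∏ s ∈ B.parts, term s :=
    Finset.prod_pos fun s _ => htermpos s
  have hlog : Real.log (P₀ + ∑ s ∈ B.parts, A s).det
      ≤ Real.log P₀.det + ∑ s ∈ B.parts, Real.log (term s) := by
    calc Real.log (P₀ + ∑ s ∈ B.parts, A s).det
        ≤ Real.log (P₀.det * ∏ s ∈ B.parts, term s) :=
          Real.log_le_log hT.det_pos hle
      _ = Real.log P₀.det + ∑ s ∈ B.parts, Real.log (term s) := by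
          rw [Real.log_mul hd.ne' hprodpos.ne',
            Real.log_prod (fun s _ => (htermpos s).ne')]
  linarith
end

section
/- Combining both partitions: for J ∈ ℝ^{m×p}, block-diagonal PSD Λ, diagonal positive definite P₀, a partition {B_j} of rows and a partition {P_s} of columns of J, we have -log det(Jᵀ Λ J + P₀) ≥ (M−1) log det P₀ − Σ_{j=1}^M log det((J_{B_j}ᵀ Λ_{B_j} J_{B_j})_{P} + P₀), where (·)_P denotes the block-diagonal approximation over the parameter partition P. -/
open Matrix

section SqrtCompat
open scoped MatrixOrder

noncomputable def Matrix.PosSemidef.sqrt {n : Type*} [Fintype n] [DecidableEq n]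
    {A : Matrix n n ℝ} (_hA : A.PosSemidef) : Matrix n n ℝ := CFC.sqrt A

lemma Matrix.PosSemidef.posSemidef_sqrt {n : Type*} [Fintype n] [DecidableEq n]
    {A : Matrix n n ℝ} (hA : A.PosSemidef) : hA.sqrt.PosSemidef :=
  nonneg_iff_posSemidef.mp (CFC.sqrt_nonneg A)

lemma Matrix.PosSemidef.sqrt_mul_self {n : Type*} [Fintype n] [DecidableEq n]
    {A : Matrix n n ℝ} (hA : A.PosSemidef) : hA.sqrt * hA.sqrt = A :=
  CFC.sqrt_mul_sqrt_self A hA.nonneg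

end SqrtCompat

namespace ParamAux

variable {n : Type*} [Fintype n] [DecidableEq n]

lemma det_nonneg' {X : Matrix n n ℝ} (hX : X.PosSemidef) : 0 ≤ X.det := by
  rw [hX.isHermitian.det_eq_prod_eigenvalues]
  exact Finset.prod_nonneg fun i _ => hX.eigenvalues_nonneg i

lemma one_le_det_one_add {N : Matrix n n ℝ} (hN : N.PosSemidef) : 1 ≤ (1 + N).det := by
  have h := hN.isHermitian
  have hUU : (h.eigenvectorUnitary : Matrix n n ℝ) * (star h.eigenvectorUnitary : Matrix n n ℝ) = 1 :=
    (Matrix.mem_unitaryGroup_iff).mp h.eigenvectorUnitary.2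
  have key : 1 + N = (h.eigenvectorUnitary : Matrix n n ℝ) *
      (1 + diagonal (RCLike.ofReal ∘ h.eigenvalues)) * (star h.eigenvectorUnitary : Matrix n n ℝ) := by
    rw [mul_add, add_mul, mul_one, hUU]
    exact congrArg (1 + ·) h.spectral_theorem
  rw [key, det_mul_right_comm, hUU, one_mul, ← diagonal_one, diagonal_add, det_diagonal]
  calc (1:ℝ) = ∏ _i : n, (1:ℝ) := Finset.prod_const_one.symm
    _ ≤ _ := Finset.prod_le_prod (fun i _ => zero_le_one) (fun i _ => by
        have := hN.eigenvalues_nonneg i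
        simp only [Pi.add_apply, Function.comp_apply, RCLike.ofReal_real_eq_id, id_eq]
        linarith)

lemma posDef_conj_mul {M : Matrix n n ℝ} (hM : M.PosDef) {m : Type*} [Fintype m]
    (C : Matrix n m ℝ) (hC : ∀ x, C *ᵥ x = 0 → x = 0) : (Cᴴ * M * C).PosDef := by
  refine .of_dotProduct_mulVec_pos (isHermitian_conjTranspose_mul_mul C hM.1) fun x hx => ?_
  have h1 : C *ᵥ x ≠ 0 := fun h => hx (hC x h)
  simpa only [star_mulVec, dotProduct_mulVec, vecMul_vecMul] using hM.dotProduct_mulVec_pos h1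

set_option linter.unusedSectionVars false

lemma posDef_of_det_ne_zero {X : Matrix n n ℝ} (hX : X.PosSemidef) (hdet : X.det ≠ 0) :
    X.PosDef := by
  have h := hX.isHermitian
  have hev : ∀ i, 0 < h.eigenvalues i := by
    intro i
    rcases (hX.eigenvalues_nonneg i).lt_or_eq with hp | hp
    · exact hp
    · exact absurd (by rw [h.det_eq_prod_eigenvalues]
                       exact Finset.prod_eq_zero (Finset.mem_univ i) (by simp [← hp])) hdet
  have hUU : (h.eigenvectorUnitary : Matrix n n ℝ) * (star h.eigenvectorUnitary : Matrix n n ℝ) = 1 :=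
    (Matrix.mem_unitaryGroup_iff).mp h.eigenvectorUnitary.2
  have key : X = ((star h.eigenvectorUnitary : Matrix n n ℝ))ᴴ *
      diagonal (RCLike.ofReal ∘ h.eigenvalues) * (star h.eigenvectorUnitary : Matrix n n ℝ) := by
    rw [star_eq_conjTranspose, conjTranspose_conjTranspose]
    exact h.spectral_theorem
  rw [key]
  refine posDef_conj_mul (Matrix.PosDef.diagonal fun i => ?_) _ fun x hx => ?_
  · simpa using hev i
  · have : ((h.eigenvectorUnitary : Matrix n n ℝ) * (star h.eigenvectorUnitary : Matrix n n ℝ)) *ᵥ x = 0 := by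
      rw [← mulVec_mulVec, hx, mulVec_zero]
    rwa [hUU, one_mulVec] at this

lemma posDef_submatrix {M : Matrix n n ℝ} (hM : M.PosDef) {m : Type*} [Fintype m] [DecidableEq m]
    (e : m → n) (he : Function.Injective e) : (M.submatrix e e).PosDef := by
  have hker : ∀ x : m → ℝ, ((1 : Matrix n n ℝ).submatrix id e) *ᵥ x = 0 → x = 0 := by
    intro x hx
    funext i
    have := congrFun hx (e i)
    simpa [mulVec, dotProduct, one_apply, he.eq_iff] using this
  rw [(by simp : M = 1 * M * 1), submatrix_mul (he₂ := Function.bijective_id),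
    submatrix_mul (he₂ := Function.bijective_id), submatrix_id_id]
  simpa only [conjTranspose_submatrix, conjTranspose_one] using
    posDef_conj_mul hM ((1 : Matrix n n ℝ).submatrix id e) hker

lemma det_le_det_add_of_posDef {A N : Matrix n n ℝ} (hA : A.PosDef) (hN : N.PosSemidef) :
    A.det ≤ (A + N).det := by
  set S := hA.posSemidef.sqrt with hSdef
  have hS : Sᴴ = S := hA.posSemidef.posSemidef_sqrt.isHermitian
  have hSS : S * S = A := hA.posSemidef.sqrt_mul_self
  have hdetS : IsUnit S.det := by
    have h2 : S.det * S.det = A.det := by rw [← det_mul, hSS]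
    have := hA.det_pos
    refine isUnit_iff_ne_zero.2 fun h0 => ?_
    rw [h0, mul_zero] at h2; linarith
  have hinv : S * S⁻¹ = 1 := mul_nonsing_inv _ hdetS
  have hinv' : S⁻¹ * S = 1 := nonsing_inv_mul _ hdetS
  have hIH : (S⁻¹)ᴴ = S⁻¹ := by rw [conjTranspose_nonsing_inv, hS]
  have key : A + N = S * (1 + S⁻¹ * N * S⁻¹) * S := by
    rw [mul_add, add_mul, mul_one, hSS]
    have e1 : S * (S⁻¹ * N * S⁻¹) * S = (S * S⁻¹) * N * (S⁻¹ * S) := by noncomm_ring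
    rw [e1, hinv, hinv', one_mul, mul_one]
  have hpsd : (S⁻¹ * N * S⁻¹).PosSemidef := by
    have := hN.conjTranspose_mul_mul_same (S⁻¹)
    rwa [hIH] at this
  have h1 : 1 ≤ (1 + S⁻¹ * N * S⁻¹).det := one_le_det_one_add hpsd
  calc A.det = A.det * 1 := (mul_one _).symm
    _ ≤ A.det * (1 + S⁻¹ * N * S⁻¹).det := by
        exact mul_le_mul_of_nonneg_left h1 hA.det_pos.le
    _ = (A + N).det := by
        rw [key, det_mul, det_mul, ← hSS, det_mul]; ring

lemma det_le_det_add {A N : Matrix n n ℝ} (hA : A.PosSemidef) (hN : N.PosSemidef) :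
    A.det ≤ (A + N).det := by
  by_cases h : A.det = 0
  · rw [h]; exact det_nonneg' (hA.add hN)
  · exact det_le_det_add_of_posDef (posDef_of_det_ne_zero hA h) hN

lemma psd_conj_unitary {X : Matrix n n ℝ} (hX : X.IsHermitian)
    (f : n → ℝ) (hf : ∀ i, 0 ≤ f i) :
    ((hX.eigenvectorUnitary : Matrix n n ℝ) * diagonal f *
      (star hX.eigenvectorUnitary : Matrix n n ℝ)).PosSemidef := by
  have : (diagonal f).PosSemidef := posSemidef_diagonal_iff.2 hf
  simpa [star_eq_conjTranspose] using this.mul_mul_conjTranspose_same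
    (hX.eigenvectorUnitary : Matrix n n ℝ)

lemma psd_sub_one_of_inv {X : Matrix n n ℝ} (hX : X.PosDef)
    (hinv : ((1 : Matrix n n ℝ) - X⁻¹).PosSemidef) : (X - 1).PosSemidef := by
  have h := hX.isHermitian
  set lam := h.eigenvalues with hlam
  set U : Matrix n n ℝ := (h.eigenvectorUnitary : Matrix n n ℝ) with hUdef
  set V : Matrix n n ℝ := (star h.eigenvectorUnitary : Matrix n n ℝ) with hVdef
  have hUU : U * V = 1 := (Matrix.mem_unitaryGroup_iff).mp h.eigenvectorUnitary.2
  have hUU' : V * U = 1 := (Matrix.mem_unitaryGroup_iff').mp h.eigenvectorUnitary.2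
  have hVU : Uᴴ = V := by rw [hVdef, hUdef, star_eq_conjTranspose]
  have spec : X = U * diagonal lam * V := by
    simpa only [RCLike.ofReal_real_eq_id, Function.id_comp, Unitary.conjStarAlgAut_apply] using h.spectral_theorem
  have hlpos : ∀ i, 0 < lam i := hX.eigenvalues_pos
  clear_value U V lam
  have mulUV : ∀ f g : n → ℝ, (U * diagonal f * V) * (U * diagonal g * V) =
      U * diagonal (fun i => f i * g i) * V := by
    intro f g
    have e : (U * diagonal f * V) * (U * diagonal g * V) =
        U * (diagonal f * ((V * U) * diagonal g)) * V := by noncomm_ring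
    rw [e, hUU', one_mul, diagonal_mul_diagonal]
  have oneUV : (1 : Matrix n n ℝ) = U * diagonal (fun _ => (1:ℝ)) * V := by
    rw [diagonal_one, mul_one, hUU]
  have hXinv : X⁻¹ = U * diagonal (fun i => (lam i)⁻¹) * V := by
    apply Matrix.inv_eq_left_inv
    rw [spec, mulUV]
    have e : (fun i => (lam i)⁻¹ * lam i) = fun _ => (1:ℝ) := by
      funext i; exact inv_mul_cancel₀ (hlpos i).ne'
    rw [e, ← oneUV]
  have subUV : ∀ f g : n → ℝ, U * diagonal f * V - U * diagonal g * V =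
      U * diagonal (fun i => f i - g i) * V := by
    intro f g
    rw [← sub_mul, ← mul_sub, diagonal_sub]
  have hpsd_diag : ∀ f : n → ℝ, ((U * diagonal f * V).PosSemidef) → ∀ i, 0 ≤ f i := by
    intro f hW
    have h2 := hW.conjTranspose_mul_mul_same U
    have e : Uᴴ * (U * diagonal f * V) * U = diagonal f := by
      rw [hVU]
      have e2 : V * (U * diagonal f * V) * U = (V * U) * diagonal f * (V * U) := by noncomm_ring
      rw [e2, hUU', one_mul, mul_one]
    rw [e] at h2
    exact posSemidef_diagonal_iff.1 h2
  have h1 : (1 : Matrix n n ℝ) - X⁻¹ = U * diagonal (fun i => 1 - (lam i)⁻¹) * V := by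
    nth_rewrite 1 [oneUV]
    rw [hXinv, subUV]
  have hge : ∀ i, 0 ≤ lam i - 1 := by
    intro i
    have hle := hpsd_diag _ (h1 ▸ hinv) i
    have hp := hlpos i
    nlinarith [inv_mul_cancel₀ hp.ne']
  have hXm1 : X - 1 = U * diagonal (fun i => lam i - 1) * V := by
    nth_rewrite 1 [oneUV]
    rw [spec, subUV]
  rw [hXm1]
  have hdg : (diagonal fun i => lam i - 1).PosSemidef := posSemidef_diagonal_iff.2 hge
  have := hdg.mul_mul_conjTranspose_same U
  rwa [hVU] at this

lemma inv_sub_inv_psd {D N : Matrix n n ℝ} (hD : D.PosDef) (hN : N.PosSemidef) :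
    (D⁻¹ - (D + N)⁻¹).PosSemidef := by
  have hE : (D + N).PosDef := hD.add_posSemidef hN
  set F := hE.posSemidef.sqrt with hFdef
  have hF : Fᴴ = F := hE.posSemidef.posSemidef_sqrt.isHermitian
  have hFF : F * F = D + N := hE.posSemidef.sqrt_mul_self
  have hdetF : IsUnit F.det := by
    have h2 : F.det * F.det = (D + N).det := by rw [← det_mul, hFF]
    have := hE.det_pos
    refine isUnit_iff_ne_zero.2 fun h0 => ?_
    rw [h0, mul_zero] at h2; linarith
  have hFinv : F * F⁻¹ = 1 := mul_nonsing_inv _ hdetF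
  have hFinv' : F⁻¹ * F = 1 := nonsing_inv_mul _ hdetF
  have hFiH : (F⁻¹)ᴴ = F⁻¹ := by rw [conjTranspose_nonsing_inv, hF]
  set X := F * D⁻¹ * F with hXdef
  have hX : X.PosDef := by
    have hker : ∀ x : n → ℝ, F *ᵥ x = 0 → x = 0 := by
      intro x hx
      have : (F⁻¹ * F) *ᵥ x = 0 := by rw [← mulVec_mulVec, hx, mulVec_zero]
      rwa [hFinv', one_mulVec] at this
    have := posDef_conj_mul hD.inv F hker
    rwa [hF] at this
  have hdetX : IsUnit X.det := isUnit_iff_ne_zero.2 hX.det_pos.ne'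
  have hXinv : X⁻¹ = F⁻¹ * D * F⁻¹ := by
    apply Matrix.inv_eq_left_inv
    have hdetD : IsUnit D.det := isUnit_iff_ne_zero.2 hD.det_pos.ne'
    have e : F⁻¹ * D * F⁻¹ * (F * D⁻¹ * F) = F⁻¹ * (D * ((F⁻¹ * F) * D⁻¹)) * F := by
      noncomm_ring
    rw [e, hFinv', one_mul, mul_nonsing_inv _ hdetD, mul_one, hFinv']
  have honeinv : (1 : Matrix n n ℝ) - X⁻¹ = F⁻¹ * N * F⁻¹ := by
    have e1 : (1 : Matrix n n ℝ) = F⁻¹ * (D + N) * F⁻¹ := by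
      rw [← hFF]
      have e : F⁻¹ * (F * F) * F⁻¹ = (F⁻¹ * F) * (F * F⁻¹) := by noncomm_ring
      rw [e, hFinv, hFinv', one_mul]
    rw [hXinv, e1, ← sub_mul, ← mul_sub, add_sub_cancel_left]
  have hsub1 : (X - 1).PosSemidef := by
    apply psd_sub_one_of_inv hX
    rw [honeinv]
    have := hN.conjTranspose_mul_mul_same (F⁻¹)
    rwa [hFiH] at this
  have key : D⁻¹ - (D + N)⁻¹ = F⁻¹ * (X - 1) * F⁻¹ := by
    rw [mul_sub, sub_mul, mul_one, hXdef]
    have e : F⁻¹ * (F * D⁻¹ * F) * F⁻¹ = (F⁻¹ * F) * D⁻¹ * (F * F⁻¹) := by noncomm_ring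
    rw [e, hFinv, hFinv', one_mul, mul_one, ← hFF, Matrix.mul_inv_rev]
  rw [key]
  have := hsub1.conjTranspose_mul_mul_same (F⁻¹)
  rwa [hFiH] at this

lemma det_conj_sqrt {A W : Matrix n n ℝ} (hA : A.PosSemidef) (hW : W.PosDef) :
    (A + W).det = W.det * (1 + hA.sqrt * W⁻¹ * hA.sqrt).det := by
  set Q := hA.sqrt with hQdef
  have hQQ : Q * Q = A := hA.sqrt_mul_self
  have hWdet : IsUnit W.det := isUnit_iff_ne_zero.2 hW.det_pos.ne'
  have key : A + W = W * (1 + W⁻¹ * (Q * Q)) := by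
    rw [mul_add, mul_one, ← Matrix.mul_assoc, mul_nonsing_inv _ hWdet, one_mul, hQQ, add_comm]
  rw [key, det_mul]
  congr 1
  have e1 : 1 + W⁻¹ * (Q * Q) = 1 + (W⁻¹ * Q) * Q := by rw [Matrix.mul_assoc]
  rw [e1, det_one_add_mul_comm, ← Matrix.mul_assoc]

lemma pairwise_submodular {A B D : Matrix n n ℝ} (hA : A.PosSemidef) (hB : B.PosSemidef)
    (hD : D.PosDef) : (A + B + D).det * D.det ≤ (A + D).det * (B + D).det := by
  set Q := hA.sqrt with hQdef
  have hQH : Qᴴ = Q := hA.posSemidef_sqrt.isHermitian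
  have hE : (B + D).PosDef := by
    have := hD.add_posSemidef hB
    rwa [add_comm] at this
  have hBD : B + D = D + B := add_comm _ _
  have e1 : (A + B + D).det = (B + D).det * (1 + Q * (B + D)⁻¹ * Q).det := by
    have : A + B + D = A + (B + D) := by abel
    rw [this, det_conj_sqrt hA hE]
  have e2 : (A + D).det = D.det * (1 + Q * D⁻¹ * Q).det := det_conj_sqrt hA hD
  have hmono : (1 + Q * (B + D)⁻¹ * Q).det ≤ (1 + Q * D⁻¹ * Q).det := by
    have hinv : (D⁻¹ - (B + D)⁻¹).PosSemidef := by
      have := inv_sub_inv_psd hD hB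
      rwa [← hBD] at this
    have hN : (Q * (D⁻¹ - (B + D)⁻¹) * Q).PosSemidef := by
      have := hinv.conjTranspose_mul_mul_same Q
      rwa [hQH] at this
    have hX : (1 + Q * (B + D)⁻¹ * Q).PosSemidef := by
      have hq : (Q * (B + D)⁻¹ * Q).PosSemidef := by
        have := hE.inv.posSemidef.conjTranspose_mul_mul_same Q
        rwa [hQH] at this
      exact Matrix.PosSemidef.add Matrix.PosSemidef.one hq
    have hsum : (1 + Q * (B + D)⁻¹ * Q) + Q * (D⁻¹ - (B + D)⁻¹) * Q = 1 + Q * D⁻¹ * Q := by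
      rw [mul_sub, sub_mul]; abel
    have := det_le_det_add hX hN
    rwa [hsum] at this
  rw [e1, e2]
  have h1 : 0 ≤ (B + D).det := hE.det_pos.le
  have h2 : 0 ≤ D.det := hD.det_pos.le
  calc (B + D).det * (1 + Q * (B + D)⁻¹ * Q).det * D.det
      ≤ (B + D).det * (1 + Q * D⁻¹ * Q).det * D.det := by
        apply mul_le_mul_of_nonneg_right _ h2
        exact mul_le_mul_of_nonneg_left hmono h1
    _ = D.det * (1 + Q * D⁻¹ * Q).det * (B + D).det := by ring

lemma iterated_submodular {ι : Type*} [DecidableEq ι] {D : Matrix n n ℝ} (hD : D.PosDef)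
    (H : ι → Matrix n n ℝ) :
    ∀ (S : Finset ι), (∀ i ∈ S, (H i).PosSemidef) →
      (D + ∑ i ∈ S, H i).det * D.det ^ S.card ≤ D.det * ∏ i ∈ S, (D + H i).det := by
  intro S
  induction S using Finset.induction_on with
  | empty => simp
  | insert a S' hnotmem ih =>
    intro hmem
    have hSpsd : (∑ i ∈ S', H i).PosSemidef := by
      refine Finset.sum_induction H Matrix.PosSemidef (fun _ _ h1 h2 => h1.add h2)
        Matrix.PosSemidef.zero fun i hi => hmem i (Finset.mem_insert_of_mem hi)
    have ha : (H a).PosSemidef := hmem a (Finset.mem_insert_self a S')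
    rw [Finset.sum_insert hnotmem, Finset.prod_insert hnotmem, Finset.card_insert_of_notMem hnotmem]
    have step : (D + (H a + ∑ i ∈ S', H i)).det * D.det ≤ (H a + D).det * ((∑ i ∈ S', H i) + D).det := by
      have := pairwise_submodular ha hSpsd hD
      have e : H a + ∑ i ∈ S', H i + D = D + (H a + ∑ i ∈ S', H i) := by abel
      rwa [e] at this
    have ih' := ih fun i hi => hmem i (Finset.mem_insert_of_mem hi)
    have hpos1 : 0 < (H a + D).det := by
      have : (H a + D).PosDef := by
        have := hD.add_posSemidef ha; rwa [add_comm] at this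
      exact this.det_pos
    have hpos2 : 0 < (D + ∑ i ∈ S', H i).det := (hD.add_posSemidef hSpsd).det_pos
    have hposD : 0 < D.det := hD.det_pos
    calc (D + (H a + ∑ i ∈ S', H i)).det * D.det ^ (S'.card + 1)
        = ((D + (H a + ∑ i ∈ S', H i)).det * D.det) * D.det ^ S'.card := by ring
      _ ≤ ((H a + D).det * ((∑ i ∈ S', H i) + D).det) * D.det ^ S'.card := by
          exact mul_le_mul_of_nonneg_right step (pow_nonneg hposD.le _)
      _ = (H a + D).det * ((D + ∑ i ∈ S', H i).det * D.det ^ S'.card) := by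
          rw [add_comm (∑ i ∈ S', H i) D]; ring
      _ ≤ (H a + D).det * (D.det * ∏ i ∈ S', (D + H i).det) := by
          exact mul_le_mul_of_nonneg_left ih' hpos1.le
      _ = D.det * ((D + H a).det * ∏ i ∈ S', (D + H i).det) := by
          rw [add_comm (H a) D]; ring

lemma det_le_det_toBlocks {α β : Type*} [Fintype α] [DecidableEq α] [Fintype β] [DecidableEq β]
    {M : Matrix (α ⊕ β) (α ⊕ β) ℝ} (hM : M.PosDef) :
    M.det ≤ M.toBlocks₁₁.det * M.toBlocks₂₂.det := by
  have hA : M.toBlocks₁₁.PosDef := posDef_submatrix hM Sum.inl Sum.inl_injective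
  have hD : M.toBlocks₂₂.PosDef := posDef_submatrix hM Sum.inr Sum.inr_injective
  have hC : M.toBlocks₂₁ = M.toBlocks₁₂ᴴ := by
    ext i j
    have h1 : Mᴴ (Sum.inr i) (Sum.inl j) = M (Sum.inr i) (Sum.inl j) := by
      rw [hM.isHermitian]
    simp only [conjTranspose_apply, star_trivial] at h1
    simpa [toBlocks₂₁, toBlocks₁₂, conjTranspose_apply] using h1.symm
  haveI : Invertible M.toBlocks₁₁ :=
    Matrix.invertibleOfIsUnitDet _ (isUnit_iff_ne_zero.2 hA.det_pos.ne')
  have hMb : M = fromBlocks M.toBlocks₁₁ M.toBlocks₁₂ M.toBlocks₁₂ᴴ M.toBlocks₂₂ := by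
    rw [← hC]; exact (fromBlocks_toBlocks M).symm
  have hschur : (M.toBlocks₂₂ - M.toBlocks₁₂ᴴ * M.toBlocks₁₁⁻¹ * M.toBlocks₁₂).PosSemidef := by
    refine (Matrix.PosDef.fromBlocks₁₁ _ _ hA).mp ?_
    rw [← hMb]; exact hM.posSemidef
  have hSpsd : (M.toBlocks₁₂ᴴ * M.toBlocks₁₁⁻¹ * M.toBlocks₁₂).PosSemidef :=
    hA.inv.posSemidef.conjTranspose_mul_mul_same _
  have hdet : M.det = M.toBlocks₁₁.det *
      (M.toBlocks₂₂ - M.toBlocks₁₂ᴴ * M.toBlocks₁₁⁻¹ * M.toBlocks₁₂).det := by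
    conv_lhs => rw [hMb]
    rw [det_fromBlocks₁₁, invOf_eq_nonsing_inv]
  have hmono : (M.toBlocks₂₂ - M.toBlocks₁₂ᴴ * M.toBlocks₁₁⁻¹ * M.toBlocks₁₂).det ≤
      M.toBlocks₂₂.det := by
    have := det_le_det_add hschur hSpsd
    rwa [sub_add_cancel] at this
  rw [hdet]
  exact mul_le_mul_of_nonneg_left hmono hA.det_pos.le

def sumEquiv {γ : Type*} [DecidableEq γ] (t u : Finset γ) (hdisj : Disjoint t u) :
    ({x // x ∈ t} ⊕ {x // x ∈ u}) ≃ {x // x ∈ t ∪ u} where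
  toFun := Sum.elim (fun a => ⟨a.1, Finset.mem_union_left _ a.2⟩)
    (fun a => ⟨a.1, Finset.mem_union_right _ a.2⟩)
  invFun := fun a => if h : a.1 ∈ t then Sum.inl ⟨a.1, h⟩
    else Sum.inr ⟨a.1, (Finset.mem_union.1 a.2).resolve_left h⟩
  left_inv := by
    rintro (a | a)
    · simp
    · have : a.1 ∉ t := Finset.disjoint_right.mp hdisj a.2
      simp [this]
  right_inv := fun a => by
    by_cases h : a.1 ∈ t <;> simp [h]

lemma posDef_principalSub {p : ℕ} {G : Matrix (Fin p) (Fin p) ℝ} (hG : G.PosDef)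
    (s : Finset (Fin p)) : (principalSub G s).PosDef :=
  posDef_submatrix hG (fun i : {x // x ∈ s} => i.1) Subtype.val_injective

lemma fischer_aux {p : ℕ} {G : Matrix (Fin p) (Fin p) ℝ} (hG : G.PosDef) :
    ∀ S : Finset (Finset (Fin p)), (S : Set (Finset (Fin p))).PairwiseDisjoint id →
      (principalSub G (S.sup id)).det ≤ ∏ t ∈ S, (principalSub G t).det := by
  intro S
  induction S using Finset.induction_on with
  | empty =>
    intro _
    have hsup0 : (∅ : Finset (Finset (Fin p))).sup id = (∅ : Finset (Fin p)) :=
      Finset.sup_empty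
    haveI : IsEmpty {x : Fin p // x ∈ (∅ : Finset (Finset (Fin p))).sup id} :=
      ⟨fun x => Finset.notMem_empty x.1 (hsup0 ▸ x.2)⟩
    rw [Matrix.det_isEmpty]
    simp
  | insert t S' hnotmem ih =>
    intro hdisj
    have hdisj' : ((S' : Set (Finset (Fin p)))).PairwiseDisjoint id :=
      hdisj.subset (Finset.coe_subset.2 (Finset.subset_insert t S'))
    have hts : Disjoint t (S'.sup id) := by
      refine Finset.disjoint_sup_right.2 fun s hs => ?_
      exact hdisj (by simp) (by simp [hs]) (fun h => hnotmem (h ▸ hs))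
    have hsup : (insert t S').sup id = t ∪ S'.sup id := by
      rw [Finset.sup_insert]; rfl
    rw [hsup, Finset.prod_insert hnotmem]
    set u' := S'.sup id with hu'
    set e := sumEquiv t u' hts with hedef
    set M' := (principalSub G (t ∪ u')).submatrix e e with hM'def
    have hdet : M'.det = (principalSub G (t ∪ u')).det := det_submatrix_equiv_self e _
    have hM' : M'.PosDef :=
      posDef_submatrix (posDef_principalSub hG (t ∪ u')) e e.injective
    have hb1 : M'.toBlocks₁₁ = principalSub G t := by ext i j; rfl
    have hb2 : M'.toBlocks₂₂ = principalSub G u' := by ext i j; rfl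
    have h2 := det_le_det_toBlocks hM'
    rw [hb1, hb2, hdet] at h2
    refine h2.trans ?_
    exact mul_le_mul_of_nonneg_left (ih hdisj') (posDef_principalSub hG t).det_pos.le

end ParamAux

open ParamAux

theorem parametric_doubly_lower_bound {m p : ℕ}
    (J : Matrix (Fin m) (Fin p) ℝ) (Λ : Matrix (Fin m) (Fin m) ℝ)
    (d : Fin p → ℝ) (hd : ∀ i, 0 < d i)
    (hΛ : Λ.PosSemidef)
    (B : Finpartition (Finset.univ : Finset (Fin m)))
    (hblock : ∀ i j : Fin m, (∀ s ∈ B.parts, i ∈ s → j ∉ s) → Λ i j = 0)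
    (P : Finpartition (Finset.univ : Finset (Fin p))) :
    -Real.log (Jᵀ * Λ * J + Matrix.diagonal d).det ≥
      ((B.parts.card : ℝ) - 1) * Real.log (Matrix.diagonal d).det -
        ∑ s ∈ B.parts, ∑ t ∈ P.parts,
          Real.log ((principalSub ((rowSub J s)ᵀ * principalSub Λ s * rowSub J s) t +
            principalSub (Matrix.diagonal d) t).det) := by
  classical
  set D : Matrix (Fin p) (Fin p) ℝ := Matrix.diagonal d with hDdef
  have hD : D.PosDef := Matrix.PosDef.diagonal hd
  set H : Finset (Fin m) → Matrix (Fin p) (Fin p) ℝ :=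
    fun s => (rowSub J s)ᵀ * principalSub Λ s * rowSub J s with hHdef
  have hHpsd : ∀ s : Finset (Fin m), (H s).PosSemidef := by
    intro s
    have h1 : (principalSub Λ s).PosSemidef := hΛ.submatrix _
    have h2 := h1.conjTranspose_mul_mul_same (rowSub J s)
    have h3 : (rowSub J s)ᴴ = (rowSub J s)ᵀ := rfl
    rwa [h3] at h2
  -- the sum decomposition
  have hsum : Jᵀ * Λ * J = ∑ s ∈ B.parts, H s := by
    ext a b
    have hentry : ∀ s : Finset (Fin m),
        (H s) a b = ∑ i ∈ s, ∑ j ∈ s, J i a * Λ i j * J j b := by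
      intro s
      have e1 : (H s) a b =
          ∑ j' : {x // x ∈ s}, (∑ i' : {x // x ∈ s}, J i'.1 a * Λ i'.1 j'.1) * J j'.1 b := by
        simp only [hHdef, mul_apply, transpose_apply, rowSub, principalSub, submatrix_apply,
          id_eq]
      rw [e1]
      rw [Finset.sum_coe_sort s (fun j => (∑ i' : {x // x ∈ s}, J i'.1 a * Λ i'.1 j) * J j b)]
      rw [Finset.sum_comm]
      refine Finset.sum_congr rfl fun j hj => ?_
      rw [Finset.sum_mul, Finset.sum_coe_sort s (fun i => J i a * Λ i j * J j b)]
    have lhs_eq : (Jᵀ * Λ * J) a b = ∑ i : Fin m, ∑ j : Fin m, J i a * Λ i j * J j b := by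
      simp only [mul_apply, transpose_apply, Finset.sum_mul]
      rw [Finset.sum_comm]
    have hset : (Finset.univ : Finset (Fin m)) = B.parts.biUnion id := by
      rw [← Finset.sup_eq_biUnion, B.sup_parts]
    have hrhs : (∑ s ∈ B.parts, H s) a b = ∑ s ∈ B.parts, (H s) a b := by
      simp [Matrix.sum_apply]
    rw [lhs_eq, hrhs]
    have hpart : ∑ i : Fin m, (∑ j : Fin m, J i a * Λ i j * J j b) =
        ∑ s ∈ B.parts, ∑ i ∈ s, ∑ j : Fin m, J i a * Λ i j * J j b :=
      ((Finset.sum_biUnion B.supIndep.pairwiseDisjoint).symm.trans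
        (Finset.sum_congr hset.symm fun _ _ => rfl)).symm
    rw [hpart]
    refine Finset.sum_congr rfl fun s hs => ?_
    rw [hentry s]
    refine Finset.sum_congr rfl fun i hi => ?_
    refine (Finset.sum_subset (Finset.subset_univ s) fun j _ hj => ?_).symm
    have hz : Λ i j = 0 := by
      refine hblock i j fun s' hs' hi' => ?_
      have : s' = s := B.eq_of_mem_parts hs' hs hi' hi
      rwa [this]
    rw [hz, mul_zero, zero_mul]
  -- positivity facts
  have hSpsd : (∑ s ∈ B.parts, H s).PosSemidef :=
    Finset.sum_induction H Matrix.PosSemidef (fun _ _ h1 h2 => h1.add h2)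
      Matrix.PosSemidef.zero fun i _ => hHpsd i
  have hK : (D + ∑ s ∈ B.parts, H s).PosDef := hD.add_posSemidef hSpsd
  have hHD : ∀ s : Finset (Fin m), (D + H s).PosDef := fun s => hD.add_posSemidef (hHpsd s)
  -- step 1 : iterated submodularity
  have hiter := iterated_submodular hD H B.parts (fun s _ => hHpsd s)
  have h1 : Real.log (D + ∑ s ∈ B.parts, H s).det + (B.parts.card : ℝ) * Real.log D.det ≤
      Real.log D.det + ∑ s ∈ B.parts, Real.log ((D + H s).det) := by
    have hlpos : 0 < (D + ∑ s ∈ B.parts, H s).det * D.det ^ B.parts.card :=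
      mul_pos hK.det_pos (pow_pos hD.det_pos _)
    have hl := Real.log_le_log hlpos hiter
    rw [Real.log_mul hK.det_pos.ne' (pow_ne_zero _ hD.det_pos.ne'), Real.log_pow,
      Real.log_mul hD.det_pos.ne' (Finset.prod_ne_zero_iff.2 fun s _ => (hHD s).det_pos.ne'),
      Real.log_prod fun s _ => (hHD s).det_pos.ne'] at hl
    exact hl
  -- step 2 : Fischer per block
  have h2 : ∀ s ∈ B.parts, Real.log ((D + H s).det) ≤
      ∑ t ∈ P.parts, Real.log ((principalSub (H s) t + principalSub D t).det) := by
    intro s _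
    have hG : (H s + D).PosDef := by
      have := hHD s; rwa [add_comm] at this
    have hfis := fischer_aux hG P.parts P.supIndep.pairwiseDisjoint
    have hPsup : P.parts.sup id = (Finset.univ : Finset (Fin p)) := P.sup_parts
    rw [hPsup] at hfis
    let e : {x : Fin p // x ∈ (Finset.univ : Finset (Fin p))} ≃ Fin p :=
      ⟨fun x => x.1, fun x => ⟨x, Finset.mem_univ x⟩, fun _ => rfl, fun _ => rfl⟩
    have hdu : (principalSub (H s + D) (Finset.univ : Finset (Fin p))).det = (H s + D).det := by
      have he : principalSub (H s + D) (Finset.univ : Finset (Fin p)) =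
          (H s + D).submatrix e e := by ext i j; rfl
      rw [he, det_submatrix_equiv_self]
    rw [hdu] at hfis
    have hlog := Real.log_le_log hG.det_pos hfis
    rw [Real.log_prod (fun t _ => (posDef_principalSub hG t).det_pos.ne')] at hlog
    rw [add_comm D (H s)]
    refine hlog.trans (le_of_eq (Finset.sum_congr rfl fun t _ => ?_))
    have : principalSub (H s + D) t = principalSub (H s) t + principalSub D t := by
      ext i j; rfl
    rw [this]
  have h2' : ∑ s ∈ B.parts, Real.log ((D + H s).det) ≤
      ∑ s ∈ B.parts, ∑ t ∈ P.parts,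
        Real.log ((principalSub (H s) t + principalSub D t).det) :=
    Finset.sum_le_sum h2
  -- conclude
  rw [hsum, add_comm (∑ s ∈ B.parts, H s) D]
  have hring : ((B.parts.card : ℝ) - 1) * Real.log D.det =
      (B.parts.card : ℝ) * Real.log D.det - Real.log D.det := by ring
  rw [ge_iff_le, hring]
  linarith
end
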